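/- arXiv:1508.03546 — 5 statements merged into one kernel-verified Lean document; each statement's English description precedes it below -/
import Mathlib

section
/- Let p = (x, y) with x, y ∈ [0,1), and let q = (n, m) ∈ ℤ² with n > x and m ≥ y. Then q is visible from p if and only if denom((m − y)/(n − x)) ≤ 1/n. -/
open Classical

/-- `q ∈ ℤ²` is visible from `p ∈ ℝ²` if the open line segment from `p` to `q`
contains no point of `ℤ²`. -/
def Visible (p : ℝ × ℝ) (q : ℤ × ℤ) : Prop :=
  ∀ t : ℝ, 0 < t → t < 1 →
    ¬∃ z : ℤ × ℤ, (1 - t) * p.1 + t * (q.1 : ℝ) = (z.1 : ℝ) ∧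
      (1 - t) * p.2 + t * (q.2 : ℝ) = (z.2 : ℝ)

/-- `denom x = 0` if `x` is irrational, and `denom x = 1/d` if `x = c/d` in lowest
terms with `d > 0`. -/
noncomputable def denom (x : ℝ) : ℝ :=
  if h : ∃ q : ℚ, (q : ℝ) = x then 1 / (h.choose.den : ℝ) else 0

lemma denom_rat_cast (r : ℚ) : denom (r : ℝ) = 1 / (r.den : ℝ) := by
  have h : ∃ q : ℚ, (q : ℝ) = (r : ℝ) := ⟨r, rfl⟩
  have hch : h.choose = r := by
    have := h.choose_spec
    exact_mod_cast this
  rw [denom, dif_pos h, hch]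

/-- Let `p = (x, y)` with `x, y ∈ [0,1)`, and let `q = (n, m) ∈ ℤ²` with `n > x` and
`m ≥ y`. Then `q` is visible from `p` if and only if
`denom ((m − y)/(n − x)) ≤ 1/n`. -/
theorem visibility_criterion (x y : ℝ) (hx0 : 0 ≤ x) (hx1 : x < 1)
    (hy0 : 0 ≤ y) (hy1 : y < 1) (n m : ℤ) (hn : x < (n : ℝ)) (hm : y ≤ (m : ℝ)) :
    Visible (x, y) (n, m) ↔ denom (((m : ℝ) - y) / ((n : ℝ) - x)) ≤ 1 / (n : ℝ) := by
  have hnx : (0 : ℝ) < (n : ℝ) - x := by linarith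
  have hnx' : ((n : ℝ) - x) ≠ 0 := ne_of_gt hnx
  have hn1 : 1 ≤ n := by
    have : (0 : ℝ) < (n : ℝ) := lt_of_le_of_lt hx0 hn
    exact_mod_cast this
  have hnR : (0 : ℝ) < (n : ℝ) := by exact_mod_cast hn1
  set s : ℝ := ((m : ℝ) - y) / ((n : ℝ) - x) with hs_def
  constructor
  · -- visible → denom s ≤ 1/n
    intro hvis
    by_cases h : ∃ q : ℚ, (q : ℝ) = s
    · obtain ⟨q, hq⟩ := h
      rw [← hq, denom_rat_cast]
      by_contra hcon
      push_neg at hcon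
      -- hcon : 1/n < 1/q.den, so q.den < n
      have hdpos : (0 : ℝ) < (q.den : ℝ) := by exact_mod_cast q.pos
      have hdn : (q.den : ℝ) < (n : ℝ) := by
        rw [div_lt_div_iff₀ hnR hdpos] at hcon
        linarith
      have hdnZ : (q.den : ℤ) < n := by exact_mod_cast hdn
      -- key: (m - y) * q.den = q.num * (n - x)
      have hkey : ((m : ℝ) - y) * (q.den : ℝ) = (q.num : ℝ) * ((n : ℝ) - x) := by
        have hq' : (q.num : ℝ) / (q.den : ℝ) = s := by rw [← Rat.cast_def]; exact hq
        rw [hs_def] at hq'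
        field_simp at hq'
        linarith [hq']
      set t : ℝ := ((n : ℝ) - (q.den : ℝ) - x) / ((n : ℝ) - x) with ht_def
      have hnd1 : (1 : ℝ) ≤ (n : ℝ) - (q.den : ℝ) := by
        have : (q.den : ℤ) ≤ n - 1 := by omega
        have : ((q.den : ℤ) : ℝ) ≤ ((n - 1 : ℤ) : ℝ) := by exact_mod_cast this
        push_cast at this
        linarith
      have ht0 : 0 < t := by
        apply div_pos _ hnx
        linarith
      have ht1 : t < 1 := by
        rw [div_lt_one hnx]
        linarith
      have htmul : t * ((n : ℝ) - x) = (n : ℝ) - (q.den : ℝ) - x := by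
        rw [ht_def]; field_simp
      refine hvis t ht0 ht1 ⟨⟨n - (q.den : ℤ), m - q.num⟩, ?_, ?_⟩
      · show (1 - t) * x + t * (n : ℝ) = ((n - (q.den : ℤ) : ℤ) : ℝ)
        push_cast
        have h1 : ((1 - t) * x + t * (n : ℝ)) * ((n : ℝ) - x)
            = ((n : ℝ) - (q.den : ℝ)) * ((n : ℝ) - x) := by
          linear_combination ((n : ℝ) - x) * htmul
        exact mul_right_cancel₀ hnx' h1
      · show (1 - t) * y + t * (m : ℝ) = ((m - q.num : ℤ) : ℝ)
        push_cast
        have h2 : ((1 - t) * y + t * (m : ℝ)) * ((n : ℝ) - x)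
            = ((m : ℝ) - (q.num : ℝ)) * ((n : ℝ) - x) := by
          linear_combination ((m : ℝ) - y) * htmul - hkey
        exact mul_right_cancel₀ hnx' h2
    · rw [denom, dif_neg h]
      positivity
  · -- denom s ≤ 1/n → visible
    intro hd t ht0 ht1 hz
    obtain ⟨⟨a, b⟩, hz1, hz2⟩ := hz
    simp only at hz1 hz2
    have hta : t * ((n : ℝ) - x) = (a : ℝ) - x := by linarith [hz1]
    have htb : t * ((m : ℝ) - y) = (b : ℝ) - y := by linarith [hz2]
    have han : (a : ℝ) < (n : ℝ) := by nlinarith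
    have hanZ : a < n := by exact_mod_cast han
    have hxa : x < (a : ℝ) := by nlinarith
    have haZ : 1 ≤ a := by
      have : (0 : ℝ) < (a : ℝ) := lt_of_le_of_lt hx0 hxa
      exact_mod_cast this
    have h1t : (0 : ℝ) < 1 - t := by linarith
    have hna : (0 : ℝ) < (n : ℝ) - (a : ℝ) := by linarith
    -- s = (m - b) / (n - a)
    have hsr : s = (((m - b : ℤ)) : ℝ) / (((n - a : ℤ)) : ℝ) := by
      rw [hs_def]
      push_cast
      rw [div_eq_div_iff hnx' (by push_cast at hna ⊢; linarith)]
      nlinarith [hta, htb]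
    set r : ℚ := Rat.divInt (m - b) (n - a) with hr_def
    have hrs : (r : ℝ) = s := by
      rw [hsr, hr_def, Rat.divInt_eq_div]
      push_cast
      ring
    have hdvd : (r.den : ℤ) ∣ (n - a) := Rat.den_dvd (m - b) (n - a)
    have hnaZ : (0 : ℤ) < n - a := by omega
    have hden_le : (r.den : ℤ) ≤ n - a := Int.le_of_dvd hnaZ hdvd
    have hden_lt : (r.den : ℤ) < n := by omega
    rw [← hrs, denom_rat_cast] at hd
    have hdpos : (0 : ℝ) < (r.den : ℝ) := by exact_mod_cast r.pos
    rw [div_le_div_iff₀ hdpos hnR] at hd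
    have : (n : ℝ) ≤ (r.den : ℝ) := by linarith
    have : n ≤ (r.den : ℤ) := by exact_mod_cast this
    omega
end

section
/- Let p = (x, y) with x ∈ [0,1) rational and y ∈ [0,1) irrational. Then every q = (n, m) ∈ ℤ² with n > x and m ≥ y is visible from p. -/
/-- Let `p = (x, y)` with `x ∈ [0,1)` rational and `y ∈ [0,1)` irrational. Then every
`q = (n, m) ∈ ℤ²` with `n > x` and `m ≥ y` is visible from `p`. -/
theorem visible_of_rational_irrational (x y : ℝ) (hx0 : 0 ≤ x) (hx1 : x < 1)
    (hy0 : 0 ≤ y) (hy1 : y < 1) (hxQ : ∃ q : ℚ, (q : ℝ) = x) (hyI : Irrational y)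
    (n m : ℤ) (hn : x < (n : ℝ)) (hm : y ≤ (m : ℝ)) :
    Visible (x, y) (n, m) := by
  intro t ht0 ht1
  rintro ⟨⟨z1, z2⟩, h1, h2⟩
  obtain ⟨q, hq⟩ := hxQ
  simp only at h1 h2
  -- t is rational
  have hqn : (q : ℝ) < (n : ℝ) := by rw [hq]; exact hn
  have hqn' : ((n : ℚ) - q) ≠ 0 := by
    have : (q : ℝ) ≠ (n : ℝ) := ne_of_lt hqn
    intro h
    apply this
    have : ((n : ℚ) : ℝ) = (q : ℝ) := by
      have := sub_eq_zero.mp h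
      exact_mod_cast this
    simpa using this.symm
  set r : ℚ := ((z1 : ℚ) - q) / ((n : ℚ) - q) with hr
  have htr : (r : ℝ) = t := by
    have hne : (n : ℝ) - x ≠ 0 := sub_ne_zero.mpr (ne_of_gt hn)
    have ht' : t * ((n : ℝ) - x) = (z1 : ℝ) - x := by linarith [h1]
    have : (r : ℝ) * ((n : ℝ) - x) = (z1 : ℝ) - x := by
      rw [hr]
      push_cast
      rw [hq]
      field_simp
    have := this.trans ht'.symm
    exact mul_right_cancel₀ hne this
  have h1t : (1 : ℝ) - t ≠ 0 := by linarith
  have hr1 : (1 : ℚ) - r ≠ 0 := by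
    intro h
    apply h1t
    rw [← htr]
    exact_mod_cast congrArg (Rat.cast : ℚ → ℝ) h
  -- y is rational: contradiction
  apply hyI
  refine ⟨((z2 : ℚ) - r * m) / (1 - r), ?_⟩
  have hy : (1 - t) * y = (z2 : ℝ) - t * (m : ℝ) := by linarith [h2]
  push_cast
  rw [htr]
  field_simp
  linarith [hy]
end

section
/- Let x, y ∈ [0,1) and p = x·u + y·v, and fix (a′, b′) ∈ (ℤ/2)². For all integers a, b with a > x and b ≥ y, the lattice point q = a·u + b·v is visible from p and has label χ(q) = (a′, b′) if and only if a ≡ a′ (mod 2), b ≡ b′ (mod 2), and denom((b − y)/(a − x)) ≤ 1/a. (These q are exactly the endpoints of the unfoldings of geodesics on the unit regular tetrahedron from the point p to the vertex labeled (a′, b′).) -/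
open Classical

/-- The basis vector `u = (1/2, √3/2)` of the triangular lattice. -/
noncomputable def uvec : ℝ × ℝ := (1 / 2, Real.sqrt 3 / 2)

/-- The basis vector `v = (1/2, −√3/2)` of the triangular lattice. -/
noncomputable def vvec : ℝ × ℝ := (1 / 2, -(Real.sqrt 3) / 2)

/-- The point `a·u + b·v ∈ ℝ²`. -/
noncomputable def pt (a b : ℝ) : ℝ × ℝ :=
  (a * uvec.1 + b * vvec.1, a * uvec.2 + b * vvec.2)

/-- `q` is visible from `p` (with respect to the triangular lattice
`Λ = {a·u + b·v : a, b ∈ ℤ}`) if the open line segment from `p` to `q` contains no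
point of `Λ`. -/
noncomputable def TriVisible (p q : ℝ × ℝ) : Prop :=
  ∀ t : ℝ, 0 < t → t < 1 →
    ¬∃ a b : ℤ, pt (a : ℝ) (b : ℝ) =
      ((1 - t) * p.1 + t * q.1, (1 - t) * p.2 + t * q.2)

lemma pt_inj {a b c d : ℝ} (h : pt a b = pt c d) : a = c ∧ b = d := by
  have h1 := congrArg Prod.fst h
  have h2 := congrArg Prod.snd h
  simp only [pt, uvec, vvec] at h1 h2
  have hs : (0:ℝ) < Real.sqrt 3 := Real.sqrt_pos.mpr (by norm_num)
  have e1 : a + b = c + d := by linarith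
  have e2 : a - b = c - d := by nlinarith [hs]
  constructor <;> linarith

lemma denom_rat (q : ℚ) : denom (q : ℝ) = 1 / (q.den : ℝ) := by
  unfold denom
  have h : ∃ p : ℚ, (p : ℝ) = (q : ℝ) := ⟨q, rfl⟩
  rw [dif_pos h]
  have : h.choose = q := by exact_mod_cast h.choose_spec
  rw [this]

lemma visible_iff (x y : ℝ) (hx0 : 0 ≤ x) (hx1 : x < 1) (hy0 : 0 ≤ y)
    (a b : ℤ) (ha : x < (a : ℝ)) (hb : y ≤ (b : ℝ)) :
    TriVisible (pt x y) (pt (a : ℝ) (b : ℝ)) ↔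
      denom (((b : ℝ) - y) / ((a : ℝ) - x)) ≤ 1 / (a : ℝ) := by
  have hA : (0:ℝ) < (a:ℝ) - x := by linarith
  have hAne : ((a:ℝ) - x) ≠ 0 := ne_of_gt hA
  have hApos : (0:ℝ) < (a:ℝ) := lt_of_le_of_lt hx0 ha
  have ha1 : 1 ≤ a := by exact_mod_cast hApos
  have comb : ∀ t : ℝ,
      ((1-t)*(pt x y).1 + t*(pt (a:ℝ) (b:ℝ)).1,
       (1-t)*(pt x y).2 + t*(pt (a:ℝ) (b:ℝ)).2)
      = pt ((1-t)*x + t*(a:ℝ)) ((1-t)*y + t*(b:ℝ)) := by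
    intro t
    simp only [pt, uvec, vvec, Prod.mk.injEq]
    constructor <;> ring
  have key : TriVisible (pt x y) (pt (a:ℝ) (b:ℝ)) ↔
      ∀ t : ℝ, 0 < t → t < 1 →
        ¬∃ m n : ℤ, (m:ℝ) = (1-t)*x + t*(a:ℝ) ∧ (n:ℝ) = (1-t)*y + t*(b:ℝ) := by
    unfold TriVisible
    refine forall_congr' fun t => forall_congr' fun _ => forall_congr' fun _ =>
      not_congr ?_
    rw [comb t]
    constructor
    · rintro ⟨m, n, h⟩
      exact ⟨m, n, pt_inj h⟩
    · rintro ⟨m, n, h1, h2⟩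
      exact ⟨m, n, by rw [h1, h2]⟩
  rcases Classical.em (∃ q : ℚ, (q:ℝ) = ((b:ℝ) - y) / ((a:ℝ) - x)) with ⟨q, hq⟩ | hirr
  · -- rational slope
    have hq' : (b:ℝ) - y = (q:ℝ) * ((a:ℝ) - x) := by
      rw [eq_comm, div_eq_iff hAne] at hq
      linarith [hq]
    have hd1 : 1 ≤ (q.den : ℤ) := by exact_mod_cast q.pos
    have hnumR : ((q.den:ℝ)) * (q:ℝ) = (q.num:ℝ) := by
      have : ((q.den:ℚ)) * q = (q.num:ℚ) := by
        rw [mul_comm]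
        exact_mod_cast Rat.mul_den_eq_num q
      exact_mod_cast this
    rw [← hq, denom_rat]
    by_cases hcase : a ≤ (q.den : ℤ)
    · -- visible, denom small
      have hrhs : 1 / (q.den:ℝ) ≤ 1 / (a:ℝ) :=
        one_div_le_one_div_of_le hApos (by exact_mod_cast hcase)
      rw [key]
      refine iff_of_true (fun t ht0 ht1 => ?_) hrhs
      rintro ⟨m, n, hm, hn⟩
      have hmx : x < (m:ℝ) := by nlinarith
      have hm1 : 1 ≤ m := by
        have : (0:ℝ) < (m:ℝ) := lt_of_le_of_lt hx0 hmx
        exact_mod_cast this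
      have hmaR : (m:ℝ) < (a:ℝ) := by nlinarith
      have hma : m < a := by exact_mod_cast hmaR
      have hrel : (n:ℝ) - (b:ℝ) = ((m:ℝ) - (a:ℝ)) * (q:ℝ) := by
        linear_combination hn - (q:ℝ)*hm - (1-t)*hq'
      have hrelQ : ((n - b : ℤ) : ℚ) = ((m - a : ℤ) : ℚ) * q := by
        have : (((n - b : ℤ) : ℚ) : ℝ) = (((m - a : ℤ) : ℚ) * q : ℚ) := by
          push_cast
          linarith [hrel]
        exact_mod_cast this
      have hmane : ((m - a : ℤ) : ℚ) ≠ 0 := by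
        exact_mod_cast sub_ne_zero.mpr (ne_of_lt hma)
      have hqeq : q = Rat.divInt (n - b) (m - a) := by
        rw [Rat.divInt_eq_div, eq_div_iff hmane, mul_comm, ← hrelQ]
      have hdvd : (q.den : ℤ) ∣ (m - a) := by
        rw [hqeq]
        exact Rat.den_dvd _ _
      have hdvd' : (q.den : ℤ) ∣ (a - m) := dvd_sub_comm.mp hdvd
      have hle : (q.den : ℤ) ≤ a - m := Int.le_of_dvd (by omega) hdvd'
      omega
    · -- not visible, denom big
      push_neg at hcase
      have hrhs : ¬ (1 / (q.den:ℝ) ≤ 1 / (a:ℝ)) := by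
        rw [not_le]
        apply one_div_lt_one_div_of_lt
        · exact_mod_cast hd1
        · exact_mod_cast hcase
      refine iff_of_false ?_ hrhs
      rw [key]
      intro hvis
      have hdpos : (0:ℝ) < (q.den:ℝ) := by exact_mod_cast hd1
      have hm1 : (1:ℝ) ≤ (a:ℝ) - (q.den:ℝ) := by
        exact_mod_cast (by omega : (1:ℤ) ≤ a - (q.den:ℤ))
      refine hvis (((a:ℝ) - (q.den:ℝ) - x) / ((a:ℝ) - x))
        (div_pos (by linarith) hA) ((div_lt_one hA).mpr (by linarith))
        ⟨a - q.den, b - q.num, ?_, ?_⟩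
      · push_cast
        field_simp
        ring
      · push_cast
        field_simp
        linear_combination ((a:ℝ) - x) * hnumR + (q.den:ℝ) * hq'
  · -- irrational slope
    rw [denom, dif_neg hirr]
    have hrhs : (0:ℝ) ≤ 1 / (a:ℝ) := by positivity
    refine iff_of_true ?_ hrhs
    rw [key]
    intro t ht0 ht1
    rintro ⟨m, n, hm, hn⟩
    have hmaR : (m:ℝ) < (a:ℝ) := by nlinarith
    have hma : m < a := by exact_mod_cast hmaR
    have hmane : ((m - a : ℤ) : ℚ) ≠ 0 := by
      exact_mod_cast sub_ne_zero.mpr (ne_of_lt hma)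
    have hmaneR : ((m:ℝ) - (a:ℝ)) ≠ 0 := sub_ne_zero.mpr (ne_of_lt hmaR)
    apply hirr
    refine ⟨((n - b : ℤ) : ℚ) / ((m - a : ℤ) : ℚ), ?_⟩
    push_cast
    rw [div_eq_div_iff (by exact_mod_cast hmaneR) hAne]
    linear_combination ((a:ℝ)-x) * hn - ((b:ℝ)-y) * hm
      + (x - (a:ℝ)) * ((b:ℝ)-y) * (by ring : (1:ℝ) = 1)

/-- Let `x, y ∈ [0,1)`, `p = x·u + y·v`, and fix `(a′, b′) ∈ (ℤ/2)²`. For integers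
`a > x` and `b ≥ y`, the lattice point `q = a·u + b·v` is visible from `p` and carries
the label `χ(q) = (a mod 2, b mod 2) = (a′, b′)` if and only if `a ≡ a′ (mod 2)`,
`b ≡ b′ (mod 2)`, and `denom ((b − y)/(a − x)) ≤ 1/a`. These `q` are exactly the
endpoints of the unfoldings of geodesics on the unit regular tetrahedron from `p` to
the vertex labeled `(a′, b′)`. -/
theorem tetrahedron_point_to_vertex (x y : ℝ) (hx0 : 0 ≤ x) (hx1 : x < 1)
    (hy0 : 0 ≤ y) (hy1 : y < 1) (a' b' : ZMod 2) (a b : ℤ)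
    (ha : x < (a : ℝ)) (hb : y ≤ (b : ℝ)) :
    (TriVisible (pt x y) (pt (a : ℝ) (b : ℝ)) ∧
        ((a : ZMod 2), (b : ZMod 2)) = (a', b')) ↔
      ((a : ZMod 2) = a' ∧ (b : ZMod 2) = b' ∧
        denom (((b : ℝ) - y) / ((a : ℝ) - x)) ≤ 1 / (a : ℝ)) := by
  rw [Prod.mk.injEq, visible_iff x y hx0 hx1 hy0 a b ha hb]
  tauto
end

section
/- Let a, b ≥ 1 be coprime integers. Then the tumble sequence τ(a, b) is a palindrome: for every position j with 1 ≤ j ≤ a + b − 2, the letter of τ(a, b) in position j equals the letter in position a + b − 1 − j. -/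
/-- The alphabet `{r, u}` of cube rolls: `r` = right roll, `u` = up roll. -/
inductive Letter
  | r : Letter
  | u : Letter
  deriving DecidableEq

/-- The times `t ∈ (0,1)` at which the segment `t ↦ (t·a, t·b)` crosses a grid line:
`t = k/a` (crossing the vertical line `x = k`) for `1 ≤ k ≤ a−1`, and `t = i/b`
(crossing the horizontal line `y = i`) for `1 ≤ i ≤ b−1`. -/
def crossingTimes (a b : ℕ) : Finset ℚ :=
  ((Finset.Icc 1 (a - 1)).image fun k : ℕ => (k : ℚ) / (a : ℚ)) ∪
    ((Finset.Icc 1 (b - 1)).image fun i : ℕ => (i : ℚ) / (b : ℚ))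

/-- The tumble sequence `τ(a,b)`: the word over `{r, u}` obtained by recording, in
increasing order of the crossing times `t` of the segment `t ↦ (t·a, t·b)`, a letter
`r` at each crossing `t = k/a` of a vertical line and a letter `u` at each crossing
`t = i/b` of a horizontal line.  (For `gcd(a,b) = 1`, a crossing time `t` is of the
form `k/a` with `1 ≤ k ≤ a−1` exactly when `t·a` is an integer.) -/
def tumbleWord (a b : ℕ) : List Letter :=
  ((crossingTimes a b).sort (· ≤ ·)).map fun t =>
    if (t * (a : ℚ)).den = 1 then Letter.r else Letter.u

/- Auxiliary lemmas -/

lemma den_helper (a : ℕ) (t : ℚ) (h : (t * (a : ℚ)).den = 1) :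
    ((1 - t) * (a : ℚ)).den = 1 := by
  rw [Rat.den_eq_one_iff] at h
  have : (1 - t) * (a : ℚ) = (((a : ℤ) - (t * (a : ℚ)).num : ℤ) : ℚ) := by
    push_cast [h]; ring
  rw [this, Rat.den_intCast]

lemma den_iff (a : ℕ) (t : ℚ) :
    ((1 - t) * (a : ℚ)).den = 1 ↔ (t * (a : ℚ)).den = 1 := by
  constructor
  · intro h
    have := den_helper a (1 - t) h
    simpa using this
  · exact den_helper a t

lemma image_one_sub (a : ℕ) :
    (((Finset.Icc 1 (a - 1)).image fun k : ℕ => (k : ℚ) / (a : ℚ)).image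
        (fun t : ℚ => 1 - t)) =
      ((Finset.Icc 1 (a - 1)).image fun k : ℕ => (k : ℚ) / (a : ℚ)) := by
  ext x
  simp only [Finset.mem_image, Finset.mem_Icc]
  constructor
  · rintro ⟨y, ⟨k, ⟨hk1, hk2⟩, rfl⟩, rfl⟩
    have ha : 2 ≤ a := by omega
    have ha0 : (a : ℚ) ≠ 0 := by positivity
    refine ⟨a - k, ⟨by omega, by omega⟩, ?_⟩
    have hcast : ((a - k : ℕ) : ℚ) = (a : ℚ) - (k : ℚ) := by
      push_cast [Nat.cast_sub (by omega : k ≤ a)]; ring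
    rw [hcast]
    field_simp
  · rintro ⟨k, ⟨hk1, hk2⟩, rfl⟩
    have ha : 2 ≤ a := by omega
    have ha0 : (a : ℚ) ≠ 0 := by positivity
    refine ⟨((a - k : ℕ) : ℚ) / (a : ℚ), ⟨a - k, ⟨by omega, by omega⟩, rfl⟩, ?_⟩
    have hcast : ((a - k : ℕ) : ℚ) = (a : ℚ) - (k : ℚ) := by
      push_cast [Nat.cast_sub (by omega : k ≤ a)]; ring
    rw [hcast]
    field_simp
    ring

lemma crossing_image (a b : ℕ) :
    (crossingTimes a b).image (fun t : ℚ => 1 - t) = crossingTimes a b := by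
  unfold crossingTimes
  rw [Finset.image_union, image_one_sub, image_one_sub]

lemma sort_reverse (a b : ℕ) :
    ((crossingTimes a b).sort (· ≤ ·)).reverse =
      ((crossingTimes a b).sort (· ≤ ·)).map (fun t : ℚ => 1 - t) := by
  set S := crossingTimes a b with hS
  set L := S.sort (· ≤ ·) with hL
  have hsorted : L.Pairwise (· ≤ ·) := Finset.pairwise_sort _ _
  have hinj : Function.Injective (fun t : ℚ => 1 - t) := by
    exact fun x y h => sub_right_injective h
  -- the candidate list
  have hMsorted : (L.reverse.map (fun t : ℚ => 1 - t)).Pairwise (· ≤ ·) := by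
    rw [List.pairwise_map, List.pairwise_reverse]
    exact hsorted.imp fun h => sub_le_sub_left h 1
  have hperm : (L.reverse.map (fun t : ℚ => 1 - t)).Perm L := by
    refine (List.Perm.map _ L.reverse_perm).trans ?_
    rw [← Multiset.coe_eq_coe, ← Multiset.map_coe, Finset.sort_eq,
      ← Finset.image_val_of_injOn (hinj.injOn), crossing_image]
  have := List.Perm.eq_of_pairwise' hMsorted hsorted hperm
  have h2 := congrArg (List.map (fun t : ℚ => 1 - t)) this
  rw [List.map_map] at h2
  have hid : ((fun t : ℚ => 1 - t) ∘ fun t : ℚ => 1 - t) = id := by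
    funext t; simp
  rw [hid, List.map_id] at h2
  rw [h2]

lemma tumbleWord_reverse (a b : ℕ) : (tumbleWord a b).reverse = tumbleWord a b := by
  unfold tumbleWord
  rw [← List.map_reverse, sort_reverse, List.map_map]
  refine List.map_congr_left ?_
  intro t _
  simp only [Function.comp]
  by_cases h : (t * (a : ℚ)).den = 1
  · rw [if_pos h, if_pos ((den_iff a t).mpr h)]
  · rw [if_neg h, if_neg (fun hc => h ((den_iff a t).mp hc))]

lemma tumbleWord_length (a b : ℕ) (ha : 1 ≤ a) (hb : 1 ≤ b) (hab : Nat.Coprime a b) :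
    (tumbleWord a b).length = a + b - 2 := by
  have ha0 : (a : ℚ) ≠ 0 := by positivity
  have hb0 : (b : ℚ) ≠ 0 := by positivity
  have hinja : Set.InjOn (fun k : ℕ => (k : ℚ) / (a : ℚ)) (Finset.Icc 1 (a - 1)) := by
    intro x _ y _ h
    simp only [div_eq_div_iff ha0 ha0] at h
    exact_mod_cast mul_right_cancel₀ ha0 h
  have hinjb : Set.InjOn (fun i : ℕ => (i : ℚ) / (b : ℚ)) (Finset.Icc 1 (b - 1)) := by
    intro x _ y _ h
    simp only [div_eq_div_iff hb0 hb0] at h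
    exact_mod_cast mul_right_cancel₀ hb0 h
  have hdisj : Disjoint ((Finset.Icc 1 (a - 1)).image fun k : ℕ => (k : ℚ) / (a : ℚ))
      ((Finset.Icc 1 (b - 1)).image fun i : ℕ => (i : ℚ) / (b : ℚ)) := by
    rw [Finset.disjoint_left]
    rintro x hx hy
    simp only [Finset.mem_image, Finset.mem_Icc] at hx hy
    obtain ⟨k, ⟨hk1, hk2⟩, rfl⟩ := hx
    obtain ⟨i, ⟨hi1, hi2⟩, hik⟩ := hy
    have heq : (i : ℚ) * (a : ℚ) = (k : ℚ) * (b : ℚ) := by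
      rw [div_eq_div_iff hb0 ha0] at hik
      linarith
    have heqn : i * a = k * b := by exact_mod_cast heq
    have hdvd : a ∣ k * b := ⟨i, by rw [← heqn]; ring⟩
    have : a ∣ k := (Nat.Coprime.dvd_of_dvd_mul_right hab hdvd)
    have := Nat.le_of_dvd (by omega) this
    omega
  unfold tumbleWord crossingTimes
  rw [List.length_map, Finset.length_sort, Finset.card_union_of_disjoint hdisj,
    Finset.card_image_of_injOn hinja, Finset.card_image_of_injOn hinjb,
    Nat.card_Icc, Nat.card_Icc]
  omega

/-- Let `a, b ≥ 1` be coprime integers. Then the tumble sequence `τ(a, b)` is a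
palindrome: for every position `j` with `1 ≤ j ≤ a + b − 2`, the letter of `τ(a, b)`
in position `j` equals the letter in position `a + b − 1 − j` (positions indexed
`1, …, a+b−2`). -/
theorem tumble_sequence_palindrome (a b : ℕ) (ha : 1 ≤ a) (hb : 1 ≤ b)
    (hab : Nat.Coprime a b) :
    ∀ j : ℕ, 1 ≤ j → j ≤ a + b - 2 →
      (tumbleWord a b)[j - 1]? = (tumbleWord a b)[(a + b - 1 - j) - 1]? := by
  intro j hj1 hj2
  have hlen := tumbleWord_length a b ha hb hab
  have hlt : j - 1 < (tumbleWord a b).length := by omega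
  have h1 : (tumbleWord a b)[j - 1]? = (tumbleWord a b).reverse[j - 1]? := by
    rw [tumbleWord_reverse]
  rw [h1, List.getElem?_reverse hlt]
  congr 1
  omega
end

section
/- Let t be a node of the Stern–Brocot tree with parents t⁺ and t⁻. Define t₀ = t and let t_{k+1} be the positive child of t_k for k ≥ 0; then σ(t_k) = σ(t)·(υ·ρ·σ(t⁺))^k for all k ≥ 0. Likewise, if s₀ = t and s_{k+1} is the negative child of s_k, then σ(s_k) = σ(t)·(ρ·υ·σ(t⁻))^k for all k ≥ 0. In particular, the sequence of cube orientations along any branch of the Stern–Brocot tree is periodic with period at most 4. -/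
/-- One step of the Stern–Brocot recursion on triples `(g, g⁺, g⁻)`:
`true` (the letter `+`) sends `(g, g⁺, g⁻)` to `(g + g⁺, g⁺, g)`, and
`false` (the letter `−`) sends `(g, g⁺, g⁻)` to `(g + g⁻, g, g⁻)`. -/
def sbStep : (ℕ × ℕ) × (ℕ × ℕ) × (ℕ × ℕ) → Bool → (ℕ × ℕ) × (ℕ × ℕ) × (ℕ × ℕ)
  | (g, gp, _gm), true => (g + gp, gp, g)
  | (g, _gp, gm), false => (g + gm, g, gm)

/-- The Stern–Brocot triple `(g(w), g⁺(w), g⁻(w))` of the node indexed by the word `w`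
over `{+, −}` (`true` = `+`, `false` = `−`), starting from
`(g(ε), g⁺(ε), g⁻(ε)) = ((1,1), (0,1), (1,0))`. -/
def sb (w : List Bool) : (ℕ × ℕ) × (ℕ × ℕ) × (ℕ × ℕ) :=
  w.foldl sbStep ((1, 1), (0, 1), (1, 0))

/-- The permutation of `{0,1,2,3}` given in one-line notation by
`f 0, f 1, f 2, f 3`. -/
def ol (f : Fin 4 → Fin 4) (h : Function.Bijective f := by decide) :
    Equiv.Perm (Fin 4) :=
  ⟨f, Fintype.bijInv h, Fintype.leftInverse_bijInv h, Fintype.rightInverse_bijInv h⟩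

/-- `ρ = 1230`, the permutation `0↦1, 1↦2, 2↦3, 3↦0` (a right roll). -/
def ρ : Equiv.Perm (Fin 4) := ol ![1, 2, 3, 0]

/-- `υ = 2310`, the permutation `0↦2, 1↦3, 2↦1, 3↦0` (an up roll). -/
def υ : Equiv.Perm (Fin 4) := ol ![2, 3, 1, 0]

/-- The permutation associated to a letter: `r ↦ ρ`, `u ↦ υ`. -/
def toPerm : Letter → Equiv.Perm (Fin 4)
  | Letter.r => ρ
  | Letter.u => υ

/-- The orientation of a word over `{r, u}`: its image under the monoid homomorphism
into `S₄` sending `r ↦ ρ` and `u ↦ υ`, composed left-to-right (the leftmost letter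
acts first).  Note that in Mathlib `(f * g) x = f (g x)`, so the left-to-right
product of a word is accumulated by multiplying each new letter on the left. -/
def orient (l : List Letter) : Equiv.Perm (Fin 4) :=
  l.foldl (fun acc x => toPerm x * acc) 1

/-- `σ` on pairs of nonnegative integers: `σ((0,1)) = ρ⁻¹`, `σ((1,0)) = υ⁻¹`, and
`σ((a,b))` is the orientation of the tumble sequence `τ(a,b)` otherwise. -/
def sigmaPt (p : ℕ × ℕ) : Equiv.Perm (Fin 4) :=
  if p = (0, 1) then ρ⁻¹
  else if p = (1, 0) then υ⁻¹
  else orient (tumbleWord p.1 p.2)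

/-- The cube orientation `σ(g(w))` associated to the Stern–Brocot node indexed by the
word `w`. -/
def σnode (w : List Bool) : Equiv.Perm (Fin 4) :=
  sigmaPt (sb w).1

-- sanity checks


lemma sort_union_of_lt {α : Type*} [LinearOrder α] [DecidableEq α] (S T : Finset α)
    (h : ∀ x ∈ S, ∀ y ∈ T, x < y) :
    (S ∪ T).sort (· ≤ ·) = S.sort (· ≤ ·) ++ T.sort (· ≤ ·) := by
  have hd : Disjoint S T := by
    rw [Finset.disjoint_left]
    intro a haS haT
    exact absurd (h a haS a haT) (lt_irrefl a)
  refine (fun hp h1 h2 => List.Perm.eq_of_pairwise' (r := (· ≤ ·)) h1 h2 hp) ?_ ?_ ?_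
  · rw [← Multiset.coe_eq_coe]
    push_cast [Finset.sort_eq]
    rw [← Finset.disjUnion_eq_union S T hd]
    simp [Finset.sort_eq, Finset.disjUnion]
    rw [← Finset.sort_eq (α := α) S (· ≤ ·), ← Finset.sort_eq (α := α) T (· ≤ ·), ← Multiset.coe_add]
  · exact Finset.pairwise_sort _ _
  · rw [List.pairwise_append]
    refine ⟨Finset.pairwise_sort _ _, Finset.pairwise_sort _ _, ?_⟩
    intro x hx y hy
    exact (h x (by simpa using (Finset.mem_sort _).1 hx) y (by simpa using (Finset.mem_sort _).1 hy)).le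

lemma sort_image_of_strictMonoOn {α β : Type*} [LinearOrder α] [LinearOrder β] [DecidableEq β]
    (S : Finset α) (f : α → β) (hf : ∀ x ∈ S, ∀ y ∈ S, x < y → f x < f y) :
    (S.image f).sort (· ≤ ·) = (S.sort (· ≤ ·)).map f := by
  have hinj : Set.InjOn f ↑S := by
    intro x hx y hy hxy
    rcases lt_trichotomy x y with h | h | h
    · exact absurd hxy (hf x hx y hy h).ne
    · exact h
    · exact absurd hxy.symm (hf y hy x hx h).ne
  refine (fun hp h1 h2 => List.Perm.eq_of_pairwise' (r := (· ≤ ·)) h1 h2 hp) ?_ ?_ ?_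
  · rw [← Multiset.coe_eq_coe]
    push_cast [Finset.sort_eq]
    rw [Finset.image_val_of_injOn hinj, ← Finset.sort_eq (α := α) (r := (· ≤ ·)), Multiset.map_coe]
  · exact Finset.pairwise_sort _ _
  · rw [List.pairwise_map]
    have := (Finset.sortedLT_sort S).pairwise
    refine this.imp_of_mem ?_
    intro x y hx hy hxy
    exact (hf x (by simpa using (Finset.mem_sort _).1 hx) y (by simpa using (Finset.mem_sort _).1 hy) hxy).le

/-- scaled integer crossing set -/
def natCross (a b : ℕ) : Finset ℕ :=
  ((Finset.Icc 1 (a - 1)).image fun k => k * b) ∪ ((Finset.Icc 1 (b - 1)).image fun i => i * a)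

def natWord (a b : ℕ) : List Letter :=
  ((natCross a b).sort (· ≤ ·)).map fun n => if b ∣ n then Letter.r else Letter.u

lemma den_div_eq_one_iff (n b : ℕ) (hb : 0 < b) : ((n : ℚ) / (b : ℚ)).den = 1 ↔ b ∣ n := by
  constructor
  · intro h
    have h2 : (((n : ℚ) / (b : ℚ)).num : ℚ) = (n : ℚ) / (b : ℚ) := by
      exact_mod_cast Rat.den_eq_one_iff _ |>.mp h
    have hb' : (b : ℚ) ≠ 0 := by positivity
    have h3 : (((n : ℚ) / (b : ℚ)).num : ℚ) * (b : ℚ) = (n : ℚ) := by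
      field_simp at h2 ⊢
      linarith [h2]
    set m := ((n : ℚ) / (b : ℚ)).num
    have h4 : m * (b : ℤ) = (n : ℤ) := by exact_mod_cast h3
    have hm : 0 ≤ m := by
      by_contra hm
      push_neg at hm
      nlinarith [h4, Int.ofNat_nonneg n, (by exact_mod_cast hb : (0:ℤ) < b)]
    obtain ⟨m', hm'⟩ := Int.eq_ofNat_of_zero_le hm
    rw [hm'] at h4
    exact ⟨m', by exact_mod_cast (by linarith : (n:ℤ) = ↑b * ↑m')⟩
  · rintro ⟨c, rfl⟩
    have hb' : (b : ℚ) ≠ 0 := by positivity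
    rw [Nat.cast_mul, mul_comm, mul_div_assoc, div_self hb', mul_one, Rat.den_natCast]

lemma crossingTimes_eq_image (a b : ℕ) (ha : 0 < a) (hb : 0 < b) :
    crossingTimes a b = (natCross a b).image (fun n : ℕ => (n : ℚ) / ((a : ℚ) * (b : ℚ))) := by
  have ha' : (a : ℚ) ≠ 0 := by positivity
  have hb' : (b : ℚ) ≠ 0 := by positivity
  rw [crossingTimes, natCross, Finset.image_union, Finset.image_image, Finset.image_image]
  congr 1
  · apply Finset.image_congr
    intro k _
    simp only [Function.comp_apply, Nat.cast_mul]
    field_simp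
  · apply Finset.image_congr
    intro i _
    simp only [Function.comp_apply, Nat.cast_mul]
    field_simp

lemma tumbleWord_eq_natWord (a b : ℕ) (ha : 0 < a) (hb : 0 < b) :
    tumbleWord a b = natWord a b := by
  rw [tumbleWord, crossingTimes_eq_image a b ha hb,
    sort_image_of_strictMonoOn _ _ (by
      intro x _ y _ hxy
      have hab : (0:ℚ) < (a:ℚ) * (b:ℚ) := by positivity
      exact div_lt_div_of_pos_right (by exact_mod_cast hxy) hab), List.map_map, natWord]
  apply List.map_congr_left
  intro n _
  have ha' : (a : ℚ) ≠ 0 := by positivity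
  have h1 : (n : ℚ) / ((a:ℚ) * (b:ℚ)) * (a:ℚ) = (n : ℚ) / (b : ℚ) := by
    field_simp
  simp only [Function.comp_apply, h1, den_div_eq_one_iff n b hb]

lemma coprime_of_mul_eq {a b u v : ℕ} (h : a * u = b * v + 1) : Nat.Coprime a b := by
  have h1 : Nat.gcd a b ∣ 1 := by
    have := Nat.dvd_sub (Dvd.dvd.mul_right (Nat.gcd_dvd_left a b) u)
      (Dvd.dvd.mul_right (Nat.gcd_dvd_right a b) v)
    rwa [h, Nat.add_sub_cancel_left] at this
  exact Nat.eq_one_of_dvd_one h1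

lemma not_dvd_mul_of_coprime {A B i : ℕ} (hcop : Nat.Coprime A B) (hi1 : 1 ≤ i) (hi2 : i < B) :
    ¬ B ∣ i * A := by
  intro hdvd
  have : B ∣ i := (Nat.Coprime.coprime_dvd_right dvd_rfl (Nat.coprime_comm.mp hcop)).dvd_of_dvd_mul_right hdvd
  exact absurd (Nat.le_of_dvd (by omega) this) (by omega)

section Arith
variable {a b p q : ℕ}

lemma cmp1 (ha : 1 ≤ a) (hb : 1 ≤ b) (h : a * q = b * p + 1)
    {k i : ℕ} (hk1 : 1 ≤ k) (hk2 : k ≤ a - 1) (hi1 : 1 ≤ i) (hi2 : i ≤ b - 1) :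
    (k * (b + q) < i * (a + p) ↔ k * b < i * a) ∧ k * b ≠ i * a := by
  have hka : k < a := by omega
  have id1 : a * (k * q) = p * (k * b) + k := by
    calc a * (k * q) = k * (a * q) := by ring
    _ = k * (b * p + 1) := by rw [h]
    _ = p * (k * b) + k := by ring
  have h3 : a * (i * p) = p * (i * a) := by ring
  have hne : k * b ≠ i * a := by
    intro he
    rw [he, ← h3] at id1
    have l1 : a * (i * p) < a * (k * q) := by omega
    have l2 : i * p < k * q := lt_of_mul_lt_mul_left l1 (Nat.zero_le a)
    have l3 : a * (i * p + 1) ≤ a * (k * q) := Nat.mul_le_mul_left a l2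
    rw [Nat.mul_add, Nat.mul_one] at l3
    omega
  have f1 : k * b + 1 ≤ i * a → k * q ≤ i * p := by
    intro hlt
    by_contra hcon
    push_neg at hcon
    have l3 : a * (i * p + 1) ≤ a * (k * q) := Nat.mul_le_mul_left a hcon
    rw [Nat.mul_add, Nat.mul_one] at l3
    have m1 : p * (k * b + 1) ≤ p * (i * a) := Nat.mul_le_mul_left p hlt
    rw [Nat.mul_add, Nat.mul_one] at m1
    omega
  have f2 : i * a + 1 ≤ k * b → i * p + 1 ≤ k * q := by
    intro hlt
    have m1 : p * (i * a + 1) ≤ p * (k * b) := Nat.mul_le_mul_left p hlt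
    rw [Nat.mul_add, Nat.mul_one] at m1
    have l2 : a * (i * p) < a * (k * q) := by omega
    exact lt_of_mul_lt_mul_left l2 (Nat.zero_le a)
  have ek : k * (b + q) = k * b + k * q := by ring
  have ei : i * (a + p) = i * a + i * p := by ring
  refine ⟨⟨fun hlt => ?_, fun hlt => ?_⟩, hne⟩
  · rcases lt_trichotomy (k * b) (i * a) with hc | hc | hc
    · exact hc
    · exact absurd hc hne
    · have := f2 (by omega)
      omega
  · have := f1 (by omega)
    omega

lemma cmp2 (ha : 1 ≤ a) (hb : 1 ≤ b) (hp : 1 ≤ p) (hq : 1 ≤ q) (h : a * q = b * p + 1)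
    {k i : ℕ} (hk1 : 1 ≤ k) (hk2 : k ≤ p - 1) (hi1 : 1 ≤ i) (hi2 : i ≤ q - 1) :
    ((a + k) * (b + q) < (b + i) * (a + p) ↔ k * q < i * p) ∧ k * q ≠ i * p := by
  have hiq : i < q := by omega
  have id2 : q * (i * a) = b * (i * p) + i := by
    calc q * (i * a) = i * (a * q) := by ring
    _ = i * (b * p + 1) := by rw [h]
    _ = b * (i * p) + i := by ring
  have key : q * (k * b) = b * (k * q) := by ring
  have hne : k * q ≠ i * p := by
    intro he
    rw [← he] at id2
    have l1 : q * (k * b) < q * (i * a) := by omega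
    have l2 : k * b < i * a := lt_of_mul_lt_mul_left l1 (Nat.zero_le q)
    have l3 : q * (k * b + 1) ≤ q * (i * a) := Nat.mul_le_mul_left q l2
    rw [Nat.mul_add, Nat.mul_one] at l3
    omega
  have g1 : i * p + 1 ≤ k * q → i * a ≤ k * b := by
    intro hlt
    by_contra hcon
    push_neg at hcon
    have m1 : q * (k * b + 1) ≤ q * (i * a) := Nat.mul_le_mul_left q hcon
    rw [Nat.mul_add, Nat.mul_one] at m1
    have m2 : b * (i * p + 1) ≤ b * (k * q) := Nat.mul_le_mul_left b hlt
    rw [Nat.mul_add, Nat.mul_one] at m2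
    omega
  have g2 : k * q + 1 ≤ i * p → k * b + 1 ≤ i * a := by
    intro hlt
    have m2 : b * (k * q + 1) ≤ b * (i * p) := Nat.mul_le_mul_left b hlt
    rw [Nat.mul_add, Nat.mul_one] at m2
    have l1 : q * (k * b) < q * (i * a) := by omega
    exact lt_of_mul_lt_mul_left l1 (Nat.zero_le q)
  have e1 : (a + k) * (b + q) = a * b + a * q + k * b + k * q := by ring
  have e2 : (b + i) * (a + p) = a * b + b * p + i * a + i * p := by ring
  refine ⟨⟨fun hlt => ?_, fun hlt => ?_⟩, hne⟩
  · rcases lt_trichotomy (k * q) (i * p) with hc | hc | hc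
    · exact hc
    · exact absurd hc hne
    · have := g1 (by omega)
      omega
  · have := g2 (by omega)
    omega

end Arith

lemma lt_helper {k a c m : ℕ} (ha : 1 ≤ a) (hk : k ≤ a - 1) (hc : 2 ≤ c) (hm : a * c = m + 1) :
    k * c < m := by
  obtain ⟨a', rfl⟩ := Nat.exists_eq_add_of_le ha
  have hk' : k ≤ a' := by omega
  have h1 : k * c ≤ a' * c := Nat.mul_le_mul_right c hk'
  have e : (1 + a') * c = c + a' * c := by ring
  omega

lemma lt_helper2 {i b c : ℕ} (hb : 1 ≤ b) (hi : i ≤ b - 1) (hc : 1 ≤ c) : i * c < b * c := by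
  have : i < b := by omega
  exact Nat.mul_lt_mul_of_lt_of_le this (le_refl c) (by omega)
-- appended to work.lean

section Blocks
variable {a b p q : ℕ}

lemma block1_word (ha : 1 ≤ a) (hb : 1 ≤ b) (h : a * q = b * p + 1) :
    natWord a b =
      (((((Finset.Icc 1 (a-1)).image (fun k => k * (b+q))) ∪
        ((Finset.Icc 1 (b-1)).image (fun i => i * (a+p)))).sort (· ≤ ·)).map
        (fun n => if (b+q) ∣ n then Letter.r else Letter.u)) := by
  have hq1 : 1 ≤ q := by nlinarith
  have hBpos : 0 < b + q := by omega
  have hApos : 0 < a + p := by omega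
  have hABcop : Nat.Coprime (a+p) (b+q) := coprime_of_mul_eq (u := q) (v := p)
    (by calc (a+p) * q = a*q + p*q := by ring
        _ = b*p + 1 + p*q := by rw [h]
        _ = (b+q)*p + 1 := by ring)
  have habcop : Nat.Coprime a b := coprime_of_mul_eq h
  set S := (((Finset.Icc 1 (a-1)).image (fun k => k * (b+q))) ∪
        ((Finset.Icc 1 (b-1)).image (fun i => i * (a+p)))) with hS
  have hmem : ∀ x ∈ S, (∃ k, 1 ≤ k ∧ k ≤ a - 1 ∧ x = k * (b+q)) ∨
      (∃ i, 1 ≤ i ∧ i ≤ b - 1 ∧ x = i * (a+p)) := by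
    intro x hx
    rw [hS, Finset.mem_union] at hx
    rcases hx with hx | hx
    · obtain ⟨k, hk, rfl⟩ := Finset.mem_image.1 hx
      rw [Finset.mem_Icc] at hk
      exact Or.inl ⟨k, hk.1, hk.2, rfl⟩
    · obtain ⟨i, hi, rfl⟩ := Finset.mem_image.1 hx
      rw [Finset.mem_Icc] at hi
      exact Or.inr ⟨i, hi.1, hi.2, rfl⟩
  set φ : ℕ → ℕ := fun n => if (b+q) ∣ n then n / (b+q) * b else n / (a+p) * a with hφ
  have pv : ∀ k : ℕ, φ (k * (b+q)) = k * b := by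
    intro k
    rw [hφ]
    simp only [if_pos (dvd_mul_left (b+q) k), Nat.mul_div_cancel _ hBpos]
  have phd : ∀ i : ℕ, 1 ≤ i → i ≤ b - 1 → ¬ (b+q) ∣ i * (a+p) := by
    intro i hi1 hi2
    exact not_dvd_mul_of_coprime hABcop hi1 (by omega)
  have ph : ∀ i : ℕ, 1 ≤ i → i ≤ b - 1 → φ (i * (a+p)) = i * a := by
    intro i hi1 hi2
    rw [hφ]
    simp only [if_neg (phd i hi1 hi2), Nat.mul_div_cancel _ hApos]
  have hmono : ∀ x ∈ S, ∀ y ∈ S, x < y → φ x < φ y := by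
    intro x hx y hy hxy
    rcases hmem x hx with ⟨k, hk1, hk2, rfl⟩ | ⟨i, hi1, hi2, rfl⟩ <;>
      rcases hmem y hy with ⟨k', hk1', hk2', rfl⟩ | ⟨i', hi1', hi2', rfl⟩
    · rw [pv, pv]
      have : k < k' := Nat.lt_of_mul_lt_mul_right hxy
      exact lt_helper2 (b := k') (by omega) (by omega) hb
    · rw [pv, ph i' hi1' hi2']
      exact ((cmp1 ha hb h hk1 hk2 hi1' hi2').1).1 hxy
    · rw [ph i hi1 hi2, pv]
      have hc := cmp1 ha hb h hk1' hk2' hi1 hi2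
      rcases lt_trichotomy (k' * b) (i * a) with hcc | hcc | hcc
      · exact absurd (hc.1.2 hcc) (by omega)
      · exact absurd hcc hc.2
      · exact hcc
    · rw [ph i hi1 hi2, ph i' hi1' hi2']
      have : i < i' := Nat.lt_of_mul_lt_mul_right hxy
      exact lt_helper2 (b := i') (by omega) (by omega) ha
  have himg : S.image φ = natCross a b := by
    rw [hS, Finset.image_union, Finset.image_image, Finset.image_image, natCross]
    congr 1
    · apply Finset.image_congr
      intro k _
      exact pv k
    · apply Finset.image_congr
      intro i hi
      rw [Finset.coe_Icc, Set.mem_Icc] at hi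
      exact ph i hi.1 hi.2
  have hsort : (natCross a b).sort (· ≤ ·) = (S.sort (· ≤ ·)).map φ := by
    rw [← himg]
    exact sort_image_of_strictMonoOn S φ hmono
  rw [natWord, hsort, List.map_map]
  apply List.map_congr_left
  intro n hn
  have hnS : n ∈ S := (Finset.mem_sort _).1 hn
  rcases hmem n hnS with ⟨k, hk1, hk2, rfl⟩ | ⟨i, hi1, hi2, rfl⟩
  · simp only [Function.comp_apply, pv k]
    rw [if_pos (dvd_mul_left b k), if_pos (dvd_mul_left (b+q) k)]
  · simp only [Function.comp_apply, ph i hi1 hi2]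
    rw [if_neg (not_dvd_mul_of_coprime habcop hi1 (by omega)),
      if_neg (phd i hi1 hi2)]

lemma block2_word (ha : 1 ≤ a) (hb : 1 ≤ b) (hp : 1 ≤ p) (hq : 1 ≤ q) (h : a * q = b * p + 1) :
    natWord p q =
      (((((Finset.Icc 1 (p-1)).image (fun k => (a+k) * (b+q))) ∪
        ((Finset.Icc 1 (q-1)).image (fun i => (b+i) * (a+p)))).sort (· ≤ ·)).map
        (fun n => if (b+q) ∣ n then Letter.r else Letter.u)) := by
  have hBpos : 0 < b + q := by omega
  have hApos : 0 < a + p := by omega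
  have hABcop : Nat.Coprime (a+p) (b+q) := coprime_of_mul_eq (u := q) (v := p)
    (by calc (a+p) * q = a*q + p*q := by ring
        _ = b*p + 1 + p*q := by rw [h]
        _ = (b+q)*p + 1 := by ring)
  have hpqcop : Nat.Coprime p q := by
    have : Nat.Coprime q p := coprime_of_mul_eq (u := a) (v := b)
      (by rw [Nat.mul_comm q a, Nat.mul_comm p b]; exact h)
    exact this.symm
  set S := (((Finset.Icc 1 (p-1)).image (fun k => (a+k) * (b+q))) ∪
        ((Finset.Icc 1 (q-1)).image (fun i => (b+i) * (a+p)))) with hS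
  have hmem : ∀ x ∈ S, (∃ k, 1 ≤ k ∧ k ≤ p - 1 ∧ x = (a+k) * (b+q)) ∨
      (∃ i, 1 ≤ i ∧ i ≤ q - 1 ∧ x = (b+i) * (a+p)) := by
    intro x hx
    rw [hS, Finset.mem_union] at hx
    rcases hx with hx | hx
    · obtain ⟨k, hk, rfl⟩ := Finset.mem_image.1 hx
      rw [Finset.mem_Icc] at hk
      exact Or.inl ⟨k, hk.1, hk.2, rfl⟩
    · obtain ⟨i, hi, rfl⟩ := Finset.mem_image.1 hx
      rw [Finset.mem_Icc] at hi
      exact Or.inr ⟨i, hi.1, hi.2, rfl⟩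
  set φ : ℕ → ℕ := fun n => if (b+q) ∣ n then (n / (b+q) - a) * q else (n / (a+p) - b) * p with hφ
  have pv : ∀ k : ℕ, φ ((a+k) * (b+q)) = k * q := by
    intro k
    rw [hφ]
    simp only [if_pos (dvd_mul_left (b+q) (a+k)), Nat.mul_div_cancel _ hBpos, Nat.add_sub_cancel_left]
  have phd : ∀ i : ℕ, 1 ≤ i → i ≤ q - 1 → ¬ (b+q) ∣ (b+i) * (a+p) := by
    intro i hi1 hi2
    exact not_dvd_mul_of_coprime hABcop (by omega) (by omega)
  have ph : ∀ i : ℕ, 1 ≤ i → i ≤ q - 1 → φ ((b+i) * (a+p)) = i * p := by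
    intro i hi1 hi2
    rw [hφ]
    simp only [if_neg (phd i hi1 hi2), Nat.mul_div_cancel _ hApos, Nat.add_sub_cancel_left]
  have hmono : ∀ x ∈ S, ∀ y ∈ S, x < y → φ x < φ y := by
    intro x hx y hy hxy
    rcases hmem x hx with ⟨k, hk1, hk2, rfl⟩ | ⟨i, hi1, hi2, rfl⟩ <;>
      rcases hmem y hy with ⟨k', hk1', hk2', rfl⟩ | ⟨i', hi1', hi2', rfl⟩
    · rw [pv, pv]
      have : k < k' := by
        have := Nat.lt_of_mul_lt_mul_right hxy
        omega
      exact lt_helper2 (b := k') (by omega) (by omega) hq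
    · rw [pv, ph i' hi1' hi2']
      exact ((cmp2 ha hb hp hq h hk1 hk2 hi1' hi2').1).1 hxy
    · rw [ph i hi1 hi2, pv]
      have hc := cmp2 ha hb hp hq h hk1' hk2' hi1 hi2
      rcases lt_trichotomy (k' * q) (i * p) with hcc | hcc | hcc
      · exact absurd (hc.1.2 hcc) (by omega)
      · exact absurd hcc hc.2
      · exact hcc
    · rw [ph i hi1 hi2, ph i' hi1' hi2']
      have : i < i' := by
        have := Nat.lt_of_mul_lt_mul_right hxy
        omega
      exact lt_helper2 (b := i') (by omega) (by omega) hp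
  have himg : S.image φ = natCross p q := by
    rw [hS, Finset.image_union, Finset.image_image, Finset.image_image, natCross]
    congr 1
    · apply Finset.image_congr
      intro k _
      exact pv k
    · apply Finset.image_congr
      intro i hi
      rw [Finset.coe_Icc, Set.mem_Icc] at hi
      exact ph i hi.1 hi.2
  have hsort : (natCross p q).sort (· ≤ ·) = (S.sort (· ≤ ·)).map φ := by
    rw [← himg]
    exact sort_image_of_strictMonoOn S φ hmono
  rw [natWord, hsort, List.map_map]
  apply List.map_congr_left
  intro n hn
  have hnS : n ∈ S := (Finset.mem_sort _).1 hn
  rcases hmem n hnS with ⟨k, hk1, hk2, rfl⟩ | ⟨i, hi1, hi2, rfl⟩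
  · simp only [Function.comp_apply, pv k]
    rw [if_pos (dvd_mul_left q k), if_pos (dvd_mul_left (b+q) (a+k))]
  · simp only [Function.comp_apply, ph i hi1 hi2]
    rw [if_neg (not_dvd_mul_of_coprime hpqcop hi1 (by omega)),
      if_neg (phd i hi1 hi2)]

end Blocks

lemma natWord_split {a b p q : ℕ} (ha : 1 ≤ a) (hb : 1 ≤ b) (hp : 1 ≤ p) (hq : 1 ≤ q)
    (h : a * q = b * p + 1) :
    natWord (a+p) (b+q) = natWord a b ++ [Letter.u, Letter.r] ++ natWord p q := by
  have hAB : a * (b + q) = b * (a + p) + 1 := by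
    calc a * (b + q) = a * b + a * q := by ring
    _ = a * b + (b * p + 1) := by rw [h]
    _ = b * (a + p) + 1 := by ring
  have hABcop : Nat.Coprime (a+p) (b+q) := coprime_of_mul_eq (u := q) (v := p)
    (by calc (a+p) * q = a*q + p*q := by ring
        _ = b*p + 1 + p*q := by rw [h]
        _ = (b+q)*p + 1 := by ring)
  set V1 := (Finset.Icc 1 (a-1)).image (fun k => k * (b+q)) with hV1
  set H1 := (Finset.Icc 1 (b-1)).image (fun i => i * (a+p)) with hH1
  set V2 := (Finset.Icc 1 (p-1)).image (fun k => (a+k) * (b+q)) with hV2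
  set H2 := (Finset.Icc 1 (q-1)).image (fun i => (b+i) * (a+p)) with hH2
  -- decomposition of the index intervals
  have hIa : Finset.Icc 1 (a+p-1) = (Finset.Icc 1 (a-1) ∪ {a}) ∪ (Finset.Icc 1 (p-1)).image (a + ·) := by
    rw [Finset.image_add_left_Icc]
    ext x
    simp only [Finset.mem_Icc, Finset.mem_union, Finset.mem_singleton]
    omega
  have hIb : Finset.Icc 1 (b+q-1) = (Finset.Icc 1 (b-1) ∪ {b}) ∪ (Finset.Icc 1 (q-1)).image (b + ·) := by
    rw [Finset.image_add_left_Icc]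
    ext x
    simp only [Finset.mem_Icc, Finset.mem_union, Finset.mem_singleton]
    omega
  have hdecomp : natCross (a+p) (b+q) =
      (V1 ∪ H1) ∪ ({b*(a+p)} ∪ ({a*(b+q)} ∪ (V2 ∪ H2))) := by
    rw [natCross, hIa, hIb, Finset.image_union, Finset.image_union, Finset.image_union,
      Finset.image_union, Finset.image_image, Finset.image_image,
      Finset.image_singleton, Finset.image_singleton]
    have e1 : Finset.image ((fun k => k * (b + q)) ∘ (a + ·)) (Finset.Icc 1 (p-1)) = V2 := rfl
    have e2 : Finset.image ((fun i => i * (a + p)) ∘ (b + ·)) (Finset.Icc 1 (q-1)) = H2 := rfl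
    rw [e1, e2]
    ext x
    simp only [Finset.mem_union, Finset.mem_singleton]
    tauto
  -- bounds
  have memB1 : ∀ x ∈ V1 ∪ H1, x < b * (a+p) := by
    intro x hx
    rcases Finset.mem_union.1 hx with hx | hx
    · obtain ⟨k, hk, rfl⟩ := Finset.mem_image.1 hx
      rw [Finset.mem_Icc] at hk
      exact lt_helper ha hk.2 (by omega) hAB
    · obtain ⟨i, hi, rfl⟩ := Finset.mem_image.1 hx
      rw [Finset.mem_Icc] at hi
      exact lt_helper2 hb hi.2 (by omega)
  have memB2 : ∀ y ∈ V2 ∪ H2, a * (b+q) < y := by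
    intro y hy
    rcases Finset.mem_union.1 hy with hy | hy
    · obtain ⟨k, hk, rfl⟩ := Finset.mem_image.1 hy
      rw [Finset.mem_Icc] at hk
      have : a * (b+q) < (a+1) * (b+q) := by nlinarith
      have h2 : (a+1) * (b+q) ≤ (a+k) * (b+q) := Nat.mul_le_mul_right _ (by omega)
      omega
    · obtain ⟨i, hi, rfl⟩ := Finset.mem_image.1 hy
      rw [Finset.mem_Icc] at hi
      have h2 : (b+1) * (a+p) ≤ (b+i) * (a+p) := Nat.mul_le_mul_right _ (by omega)
      have e : (b+1) * (a+p) = b * (a+p) + (a+p) := by ring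
      omega
  have hmid : b * (a+p) < a * (b+q) := by omega
  have ord1 : ∀ x ∈ V1 ∪ H1, ∀ y ∈ ({b*(a+p)} ∪ ({a*(b+q)} ∪ (V2 ∪ H2)) : Finset ℕ), x < y := by
    intro x hx y hy
    have h1 := memB1 x hx
    rcases Finset.mem_union.1 hy with hy | hy
    · rw [Finset.mem_singleton] at hy
      omega
    rcases Finset.mem_union.1 hy with hy | hy
    · rw [Finset.mem_singleton] at hy
      omega
    · have := memB2 y hy
      omega
  have ord2 : ∀ x ∈ ({b*(a+p)} : Finset ℕ), ∀ y ∈ ({a*(b+q)} ∪ (V2 ∪ H2) : Finset ℕ), x < y := by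
    intro x hx y hy
    rw [Finset.mem_singleton] at hx
    subst hx
    rcases Finset.mem_union.1 hy with hy | hy
    · rw [Finset.mem_singleton] at hy
      omega
    · have := memB2 y hy
      omega
  have ord3 : ∀ x ∈ ({a*(b+q)} : Finset ℕ), ∀ y ∈ V2 ∪ H2, x < y := by
    intro x hx y hy
    rw [Finset.mem_singleton] at hx
    subst hx
    exact memB2 y hy
  have hsort : (natCross (a+p) (b+q)).sort (· ≤ ·) =
      ((V1 ∪ H1).sort (· ≤ ·)) ++ ([b*(a+p)] ++ ([a*(b+q)] ++ (V2 ∪ H2).sort (· ≤ ·))) := by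
    rw [hdecomp, sort_union_of_lt _ _ ord1, sort_union_of_lt _ _ ord2,
      sort_union_of_lt _ _ ord3, Finset.sort_singleton, Finset.sort_singleton]
  have hbu : ¬ (b+q) ∣ b * (a+p) := not_dvd_mul_of_coprime hABcop hb (by omega)
  rw [natWord, hsort]
  rw [List.map_append, List.map_append, List.map_append]
  rw [block1_word ha hb h, block2_word ha hb hp hq h]
  simp only [List.map_cons, List.map_nil, if_neg hbu, if_pos (dvd_mul_left (b+q) a)]
  rw [← hV1, ← hH1, ← hV2, ← hH2]
  simp [List.append_assoc]

def flipL : Letter → Letter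
  | Letter.r => Letter.u
  | Letter.u => Letter.r

lemma natWord_swap {a b : ℕ} (hcop : Nat.Coprime a b) :
    natWord b a = (natWord a b).map flipL := by
  have hset : natCross b a = natCross a b := by
    rw [natCross, natCross, Finset.union_comm]
  rw [natWord, natWord, hset, List.map_map]
  apply List.map_congr_left
  intro n hn
  have hnS : n ∈ natCross a b := (Finset.mem_sort _).1 hn
  rw [natCross, Finset.mem_union] at hnS
  rcases hnS with hx | hx
  · obtain ⟨k, hk, rfl⟩ := Finset.mem_image.1 hx
    rw [Finset.mem_Icc] at hk
    have h1 : ¬ a ∣ k * b := not_dvd_mul_of_coprime hcop.symm hk.1 (by omega)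
    simp only [Function.comp_apply, if_neg h1, if_pos (dvd_mul_left b k), flipL]
  · obtain ⟨i, hi, rfl⟩ := Finset.mem_image.1 hx
    rw [Finset.mem_Icc] at hi
    have h1 : ¬ b ∣ i * a := not_dvd_mul_of_coprime hcop hi.1 (by omega)
    simp only [Function.comp_apply, if_pos (dvd_mul_left a i), if_neg h1, flipL]

lemma flipL_flipL (x : Letter) : flipL (flipL x) = x := by cases x <;> rfl

lemma natWord_split_neg {a b r s : ℕ} (ha : 1 ≤ a) (hb : 1 ≤ b) (hr : 1 ≤ r) (hs : 1 ≤ s)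
    (h : b * r = a * s + 1) :
    natWord (a+r) (b+s) = natWord a b ++ [Letter.r, Letter.u] ++ natWord r s := by
  have hsp := natWord_split hb ha hs hr h
  have cba : Nat.Coprime b a := coprime_of_mul_eq h
  have crs : Nat.Coprime r s := coprime_of_mul_eq (a := r) (b := s) (u := b) (v := a)
    (by rw [Nat.mul_comm r b, Nat.mul_comm s a]; exact h)
  have cchild : Nat.Coprime (b+s) (a+r) := coprime_of_mul_eq (u := r) (v := s)
    (by calc (b+s) * r = b*r + s*r := by ring
        _ = a*s + 1 + s*r := by rw [h]
        _ = (a+r)*s + 1 := by ring)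
  have e1 : natWord (a+r) (b+s) = (natWord (b+s) (a+r)).map flipL := natWord_swap cchild
  have e2 : natWord a b = (natWord b a).map flipL := natWord_swap cba
  have e3 : natWord r s = (natWord s r).map flipL := natWord_swap crs.symm
  rw [e1, hsp, List.map_append, List.map_append, e2, e3]
  rfl

lemma natWord_one_right (n : ℕ) : natWord 1 n = List.replicate (n-1) Letter.u := by
  rw [natWord, List.eq_replicate_iff]
  constructor
  · rw [List.length_map, Finset.length_sort, natCross]
    simp [Nat.card_Icc]
  · intro x hx
    rw [List.mem_map] at hx
    obtain ⟨m, hm, rfl⟩ := hx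
    have hmS : m ∈ natCross 1 n := (Finset.mem_sort _).1 hm
    rw [natCross, Finset.mem_union] at hmS
    rcases hmS with hx | hx
    · simp at hx
    · obtain ⟨i, hi, rfl⟩ := Finset.mem_image.1 hx
      rw [Finset.mem_Icc] at hi
      have : ¬ n ∣ i * 1 := by
        rw [Nat.mul_one]
        intro hd
        have := Nat.le_of_dvd (by omega) hd
        omega
      rw [if_neg this]

lemma natWord_one_left (n : ℕ) : natWord n 1 = List.replicate (n-1) Letter.r := by
  rw [natWord, List.eq_replicate_iff]
  constructor
  · rw [List.length_map, Finset.length_sort, natCross]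
    have : Finset.Icc 1 (1-1) = (∅ : Finset ℕ) := rfl
    rw [this]
    simp [Nat.card_Icc]
  · intro x hx
    rw [List.mem_map] at hx
    obtain ⟨m, hm, rfl⟩ := hx
    rw [if_pos (one_dvd m)]
lemma foldl_orient (l : List Letter) : ∀ g : Equiv.Perm (Fin 4),
    l.foldl (fun acc x => toPerm x * acc) g = orient l * g := by
  induction l with
  | nil => intro g; simp [orient]
  | cons x l ih =>
    intro g
    show l.foldl _ (toPerm x * g) = orient (x :: l) * g
    have : orient (x :: l) = l.foldl (fun acc x => toPerm x * acc) (toPerm x * 1) := rfl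
    rw [this, ih (toPerm x * g), ih (toPerm x * 1), mul_one, mul_assoc]

lemma orient_append (l1 l2 : List Letter) : orient (l1 ++ l2) = orient l2 * orient l1 := by
  rw [orient, List.foldl_append, foldl_orient]
  rfl

lemma orient_ur : orient [Letter.u, Letter.r] = ρ * υ := by
  show toPerm Letter.r * (toPerm Letter.u * 1) = ρ * υ
  rw [mul_one]; rfl

lemma orient_ru : orient [Letter.r, Letter.u] = υ * ρ := by
  show toPerm Letter.u * (toPerm Letter.r * 1) = υ * ρ
  rw [mul_one]; rfl

lemma orient_u : orient [Letter.u] = υ := by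
  show toPerm Letter.u * 1 = υ
  rw [mul_one]; rfl

lemma orient_r : orient [Letter.r] = ρ := by
  show toPerm Letter.r * 1 = ρ
  rw [mul_one]; rfl

def Valid : (ℕ × ℕ) × (ℕ × ℕ) × (ℕ × ℕ) → Prop := fun t =>
  1 ≤ t.1.1 ∧ 1 ≤ t.1.2 ∧ t.1.1 * t.2.1.2 = t.1.2 * t.2.1.1 + 1 ∧
    t.1.2 * t.2.2.1 = t.1.1 * t.2.2.2 + 1

lemma valid_step (t : (ℕ × ℕ) × (ℕ × ℕ) × (ℕ × ℕ)) (c : Bool) (hv : Valid t) :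
    Valid (sbStep t c) := by
  obtain ⟨⟨a, b⟩, ⟨p, q⟩, ⟨r, s⟩⟩ := t
  obtain ⟨h1, h2, h3, h4⟩ := hv
  have h1' : 1 ≤ a := h1
  have h2' : 1 ≤ b := h2
  simp only [Valid] at h3 h4 ⊢
  cases c
  · refine ⟨show 1 ≤ a + r by omega, show 1 ≤ b + s by omega, ?_, ?_⟩
    · show (a + r) * b = (b + s) * a + 1
      calc (a + r) * b = a * b + b * r := by ring
      _ = a * b + (a * s + 1) := by rw [h4]
      _ = (b + s) * a + 1 := by ring
    · show (b + s) * r = (a + r) * s + 1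
      calc (b + s) * r = b * r + s * r := by ring
      _ = a * s + 1 + s * r := by rw [h4]
      _ = (a + r) * s + 1 := by ring
  · refine ⟨show 1 ≤ a + p by omega, show 1 ≤ b + q by omega, ?_, ?_⟩
    · show (a + p) * q = (b + q) * p + 1
      calc (a + p) * q = a * q + p * q := by ring
      _ = b * p + 1 + p * q := by rw [h3]
      _ = (b + q) * p + 1 := by ring
    · show (b + q) * a = (a + p) * b + 1
      calc (b + q) * a = a * b + a * q := by ring
      _ = a * b + (b * p + 1) := by rw [h3]
      _ = (a + p) * b + 1 := by ring

lemma valid_foldl (l : List Bool) : ∀ t, Valid t → Valid (l.foldl sbStep t) := by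
  induction l with
  | nil => intro t h; exact h
  | cons c l ih =>
    intro t h
    exact ih _ (valid_step t c h)

lemma valid_sb (w : List Bool) : Valid (sb w) :=
  valid_foldl w _ ⟨le_refl 1, le_refl 1, by norm_num, by norm_num⟩

lemma sigmaPt_eval {a b : ℕ} (ha : 1 ≤ a) (hb : 1 ≤ b) :
    sigmaPt (a, b) = orient (natWord a b) := by
  rw [sigmaPt, if_neg (by simp [Prod.ext_iff]; omega), if_neg (by simp [Prod.ext_iff]; omega),
    tumbleWord_eq_natWord a b (by omega) (by omega)]

lemma step_pos {a b p q r s : ℕ} (hv : Valid ((a, b), (p, q), (r, s))) :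
    sigmaPt (a + p, b + q) = sigmaPt (p, q) * ρ * υ * sigmaPt (a, b) := by
  obtain ⟨h1, h2, h3, h4⟩ := hv
  have h1' : 1 ≤ a := h1
  have h2' : 1 ≤ b := h2
  have h3' : a * q = b * p + 1 := h3
  by_cases hp : p = 0
  · subst hp
    have haq : a = 1 ∧ q = 1 := by
      have : a * q = 1 := by omega
      exact ⟨Nat.eq_one_of_mul_eq_one_right this, Nat.eq_one_of_mul_eq_one_left this⟩
    obtain ⟨rfl, rfl⟩ := haq
    have e0 : sigmaPt (0, 1) = ρ⁻¹ := by rw [sigmaPt, if_pos rfl]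
    have e1 : sigmaPt (1 + 0, b + 1) = orient (natWord 1 (b+1)) := by
      have := sigmaPt_eval (a := 1 + 0) (b := b + 1) (by omega) (by omega)
      exact this
    have e2 : sigmaPt (1, b) = orient (natWord 1 b) := sigmaPt_eval (by omega) (by omega)
    rw [e0, e1, e2, natWord_one_right, natWord_one_right]
    have : List.replicate (b + 1 - 1) Letter.u
        = List.replicate (b - 1) Letter.u ++ [Letter.u] := by
      have hb2 : b + 1 - 1 = b - 1 + 1 := by omega
      rw [hb2, List.replicate_succ']
    rw [this, orient_append, orient_u]
    group
  · have hp' : 1 ≤ p := by omega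
    have hq' : 1 ≤ q := by
      rcases Nat.eq_zero_or_pos q with h | h
      · subst h; omega
      · omega
    have e1 : sigmaPt (a + p, b + q) = orient (natWord (a+p) (b+q)) :=
      sigmaPt_eval (by omega) (by omega)
    have e2 : sigmaPt (p, q) = orient (natWord p q) := sigmaPt_eval hp' hq'
    have e3 : sigmaPt (a, b) = orient (natWord a b) := sigmaPt_eval h1' h2'
    rw [e1, e2, e3, natWord_split h1' h2' hp' hq' h3', orient_append, orient_append, orient_ur]
    group

lemma step_neg {a b p q r s : ℕ} (hv : Valid ((a, b), (p, q), (r, s))) :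
    sigmaPt (a + r, b + s) = sigmaPt (r, s) * υ * ρ * sigmaPt (a, b) := by
  obtain ⟨h1, h2, h3, h4⟩ := hv
  have h1' : 1 ≤ a := h1
  have h2' : 1 ≤ b := h2
  have h4' : b * r = a * s + 1 := h4
  by_cases hs : s = 0
  · subst hs
    have hbr : b = 1 ∧ r = 1 := by
      have : b * r = 1 := by omega
      exact ⟨Nat.eq_one_of_mul_eq_one_right this, Nat.eq_one_of_mul_eq_one_left this⟩
    obtain ⟨rfl, rfl⟩ := hbr
    have e0 : sigmaPt (1, 0) = υ⁻¹ := by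
      rw [sigmaPt, if_neg (by simp), if_pos rfl]
    have e1 : sigmaPt (a + 1, 1 + 0) = orient (natWord (a+1) 1) := by
      have := sigmaPt_eval (a := a + 1) (b := 1 + 0) (by omega) (by omega)
      exact this
    have e2 : sigmaPt (a, 1) = orient (natWord a 1) := sigmaPt_eval (by omega) (by omega)
    rw [e0, e1, e2, natWord_one_left, natWord_one_left]
    have : List.replicate (a + 1 - 1) Letter.r
        = List.replicate (a - 1) Letter.r ++ [Letter.r] := by
      have ha2 : a + 1 - 1 = a - 1 + 1 := by omega
      rw [ha2, List.replicate_succ']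
    rw [this, orient_append, orient_r]
    group
  · have hs' : 1 ≤ s := by omega
    have hr' : 1 ≤ r := by
      rcases Nat.eq_zero_or_pos r with h | h
      · subst h; omega
      · omega
    have e1 : sigmaPt (a + r, b + s) = orient (natWord (a+r) (b+s)) :=
      sigmaPt_eval (by omega) (by omega)
    have e2 : sigmaPt (r, s) = orient (natWord r s) := sigmaPt_eval hr' hs'
    have e3 : sigmaPt (a, b) = orient (natWord a b) := sigmaPt_eval h1' h2'
    rw [e1, e2, e3, natWord_split_neg h1' h2' hr' hs' h4', orient_append, orient_append, orient_ru]
    group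

lemma sb_append (w l : List Bool) : sb (w ++ l) = l.foldl sbStep (sb w) := by
  rw [sb, sb, List.foldl_append]

lemma step_pos_triple (T : (ℕ × ℕ) × (ℕ × ℕ) × (ℕ × ℕ)) (hv : Valid T) :
    sigmaPt (sbStep T true).1 = sigmaPt T.2.1 * ρ * υ * sigmaPt T.1 := by
  obtain ⟨⟨a, b⟩, ⟨p, q⟩, ⟨r, s⟩⟩ := T
  exact step_pos hv

lemma step_neg_triple (T : (ℕ × ℕ) × (ℕ × ℕ) × (ℕ × ℕ)) (hv : Valid T) :
    sigmaPt (sbStep T false).1 = sigmaPt T.2.2 * υ * ρ * sigmaPt T.1 := by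
  obtain ⟨⟨a, b⟩, ⟨p, q⟩, ⟨r, s⟩⟩ := T
  exact step_neg hv

lemma gp_const (T : (ℕ × ℕ) × (ℕ × ℕ) × (ℕ × ℕ)) : (sbStep T true).2.1 = T.2.1 := by
  obtain ⟨⟨a, b⟩, ⟨p, q⟩, ⟨r, s⟩⟩ := T
  rfl

lemma gm_const (T : (ℕ × ℕ) × (ℕ × ℕ) × (ℕ × ℕ)) : (sbStep T false).2.2 = T.2.2 := by
  obtain ⟨⟨a, b⟩, ⟨p, q⟩, ⟨r, s⟩⟩ := T
  rfl

lemma rep_append_succ (w : List Bool) (k : ℕ) (c : Bool) :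
    sb (w ++ List.replicate (k+1) c) = sbStep (sb (w ++ List.replicate k c)) c := by
  rw [List.replicate_succ' (n := k) (a := c), ← List.append_assoc, sb_append (w ++ List.replicate k c) [c]]
  rfl

lemma gp_rep (w : List Bool) (k : ℕ) :
    (sb (w ++ List.replicate k true)).2.1 = (sb w).2.1 := by
  induction k with
  | zero => rw [List.replicate_zero, List.append_nil]
  | succ k ih => rw [rep_append_succ, gp_const, ih]

lemma gm_rep (w : List Bool) (k : ℕ) :
    (sb (w ++ List.replicate k false)).2.2 = (sb w).2.2 := by
  induction k with
  | zero => rw [List.replicate_zero, List.append_nil]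
  | succ k ih => rw [rep_append_succ, gm_const, ih]

lemma pos_branch (w : List Bool) (k : ℕ) :
    σnode (w ++ List.replicate k true) = (sigmaPt (sb w).2.1 * ρ * υ) ^ k * σnode w := by
  induction k with
  | zero => rw [List.replicate_zero, List.append_nil, pow_zero, one_mul]
  | succ k ih =>
    rw [σnode, rep_append_succ, step_pos_triple _ (valid_sb _), gp_rep, ← σnode, ih, pow_succ',
      mul_assoc, mul_assoc, mul_assoc]
    rfl

lemma neg_branch (w : List Bool) (k : ℕ) :
    σnode (w ++ List.replicate k false) = (sigmaPt (sb w).2.2 * υ * ρ) ^ k * σnode w := by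
  induction k with
  | zero => rw [List.replicate_zero, List.append_nil, pow_zero, one_mul]
  | succ k ih =>
    rw [σnode, rep_append_succ, step_neg_triple _ (valid_sb _), gm_rep, ← σnode, ih, pow_succ',
      mul_assoc, mul_assoc, mul_assoc]
    rfl

set_option maxRecDepth 4000 in
lemma perm_order_le_four (x : Equiv.Perm (Fin 4)) : x ^ 3 = 1 ∨ x ^ 4 = 1 := by
  revert x
  decide

/-- Let `t` be the node of the Stern–Brocot tree indexed by the word `w`, with parents
`t⁺` and `t⁻`.  For the sequence `t₀ = t`, `t_{k+1}` = positive child of `t_k`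
(indexed by `w ++ [+]^k`), one has `σ(t_k) = σ(t)·(υ·ρ·σ(t⁺))^k`; for the sequence
`s₀ = t`, `s_{k+1}` = negative child of `s_k`, one has
`σ(s_k) = σ(t)·(ρ·υ·σ(t⁻))^k`.  (Products are composed left-to-right, the leftmost
factor acting first; in Mathlib's convention `(f * g) x = f (g x)`, the left-to-right
product `σ(t)·(υ·ρ·σ(t⁺))^k` is written `(σ(t⁺) * ρ * υ)^k * σ(t)`, and similarly for
the negative branch.)  In particular, the sequence of cube orientations along either
branch emanating from `t` is periodic with period at most `4`. -/
theorem branch_orientations_periodic (w : List Bool) :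
    (∀ k : ℕ, σnode (w ++ List.replicate k true) =
        (sigmaPt (sb w).2.1 * ρ * υ) ^ k * σnode w) ∧
      (∀ k : ℕ, σnode (w ++ List.replicate k false) =
        (sigmaPt (sb w).2.2 * υ * ρ) ^ k * σnode w) ∧
      (∃ m : ℕ, 1 ≤ m ∧ m ≤ 4 ∧ ∀ k : ℕ,
        σnode (w ++ List.replicate (k + m) true) = σnode (w ++ List.replicate k true)) ∧
      (∃ m : ℕ, 1 ≤ m ∧ m ≤ 4 ∧ ∀ k : ℕ,
        σnode (w ++ List.replicate (k + m) false) = σnode (w ++ List.replicate k false)) := by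
  refine ⟨pos_branch w, neg_branch w, ?_, ?_⟩
  · rcases perm_order_le_four (sigmaPt (sb w).2.1 * ρ * υ) with hM | hM
    · exact ⟨3, by omega, by omega, fun k => by
        rw [pos_branch, pos_branch, pow_add, hM, mul_one]⟩
    · exact ⟨4, by omega, by omega, fun k => by
        rw [pos_branch, pos_branch, pow_add, hM, mul_one]⟩
  · rcases perm_order_le_four (sigmaPt (sb w).2.2 * υ * ρ) with hM | hM
    · exact ⟨3, by omega, by omega, fun k => by
        rw [neg_branch, neg_branch, pow_add, hM, mul_one]⟩
    · exact ⟨4, by omega, by omega, fun k => by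
        rw [neg_branch, neg_branch, pow_add, hM, mul_one]⟩
end
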